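/- arXiv:2603.17489 — 4 statements merged into one kernel-verified Lean document; each statement's English description precedes it below -/
import Mathlib

section
/- Let X₂ be a multiset of 2m integers, each lying in the interval (4S, 6S] for some positive integer S, with total sum 2(4m+2)S. Let X₄ be the multiset obtained by adding 2(m+1) additional items each of size 4S to X₂. Then X₄ can be partitioned into four parts each of sum at least (4m+2)S if and only if X₂ can be partitioned into two parts each of cardinality m and sum exactly (4m+2)S. -/
private lemma eq_replicate_of_forall_le_of_sum (s : Multiset ℕ) (n v : ℕ)
    (hc : Multiset.card s = n) (hb : ∀ x ∈ s, v ≤ x) (hs : s.sum = n * v) :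
    s = Multiset.replicate n v := by
  rw [Multiset.eq_replicate]
  refine ⟨hc, fun b hbm => ?_⟩
  by_contra hne
  have hbv : v < b := lt_of_le_of_ne (hb b hbm) (Ne.symm hne)
  have hn1 : 1 ≤ n := by
    rw [← hc]
    exact Multiset.card_pos.mpr (fun h => by simp [h] at hbm)
  have hle : Multiset.card (s.erase b) • v ≤ (s.erase b).sum :=
    Multiset.card_nsmul_le_sum (fun x hx => hb x (Multiset.mem_of_mem_erase hx))
  have hce : Multiset.card (s.erase b) = n - 1 := by
    rw [Multiset.card_erase_of_mem hbm, hc, Nat.pred_eq_sub_one]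
  simp only [hce, smul_eq_mul] at hle
  have hsum' : s.sum = b + (s.erase b).sum := by
    conv_lhs => rw [← Multiset.cons_erase hbm]
    rw [Multiset.sum_cons]
  have hnv : n * v = (n - 1) * v + v := by
    rcases n with _ | n
    · omega
    · simp [Nat.succ_sub_one, Nat.succ_mul]
  rw [hnv] at hs
  generalize (n - 1) * v = w at hs hle
  omega

private lemma kbound (m S k1 k2 k3 k4 s1 s2 s3 s4 : ℕ) (hS : 1 ≤ S)
    (hk : k1 + k2 + k3 + k4 = 4 * m + 2)
    (hstot : s1 + s2 + s3 + s4 = (16 * m + 12) * S)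
    (l1 : 4 * S * k1 ≤ s1) (l2 : 4 * S * k2 ≤ s2)
    (l3 : 4 * S * k3 ≤ s3) (l4 : 4 * S * k4 ≤ s4)
    (u1 : (4 * m + 2) * S ≤ s1) (u2 : (4 * m + 2) * S ≤ s2)
    (u3 : (4 * m + 2) * S ≤ s3) (u4 : (4 * m + 2) * S ≤ s4) :
    m ≤ k1 ∧ k1 ≤ m + 1 := by
  constructor
  · have h : ((4 * m + 2) + 4 * (k2 + k3 + k4)) * S ≤ (16 * m + 12) * S := by
      calc ((4 * m + 2) + 4 * (k2 + k3 + k4)) * S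
          = (4 * m + 2) * S + (4 * S * k2 + 4 * S * k3 + 4 * S * k4) := by ring
        _ ≤ s1 + (s2 + s3 + s4) := by
            exact add_le_add u1 (add_le_add (add_le_add l2 l3) l4)
        _ = (16 * m + 12) * S := by rw [← hstot]; ring
    have h2 := Nat.le_of_mul_le_mul_right h hS
    omega
  · have h : (4 * k1 + 3 * (4 * m + 2)) * S ≤ (16 * m + 12) * S := by
      calc (4 * k1 + 3 * (4 * m + 2)) * S
          = 4 * S * k1 + ((4 * m + 2) * S + (4 * m + 2) * S + (4 * m + 2) * S) := by ring
        _ ≤ s1 + (s2 + s3 + s4) := by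
            exact add_le_add l1 (add_le_add (add_le_add u2 u3) u4)
        _ = (16 * m + 12) * S := by rw [← hstot]; ring
    have h2 := Nat.le_of_mul_le_mul_right h hS
    omega

private lemma helper (m S : ℕ) (hS : 1 ≤ S) (X₂ : Multiset ℕ)
    (hsum : X₂.sum = 2 * (4 * m + 2) * S)
    (Q₁ Q₂ Q₃ Q₄ : Multiset ℕ)
    (hsplit : X₂ + Multiset.replicate (2 * (m + 1)) (4 * S) = Q₁ + Q₂ + Q₃ + Q₄)
    (hb3 : ∀ x ∈ Q₃, 4 * S ≤ x) (hb4 : ∀ x ∈ Q₄, 4 * S ≤ x)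
    (h1 : (4 * m + 2) * S ≤ Q₁.sum) (h2 : (4 * m + 2) * S ≤ Q₂.sum)
    (hc1 : Multiset.card Q₁ = m) (hc2 : Multiset.card Q₂ = m)
    (hc3 : Multiset.card Q₃ = m + 1) (hc4 : Multiset.card Q₄ = m + 1) :
    ∃ A B : Multiset ℕ, X₂ = A + B ∧ Multiset.card A = m ∧ Multiset.card B = m ∧
        A.sum = (4 * m + 2) * S ∧ B.sum = (4 * m + 2) * S := by
  have hstot : Q₁.sum + Q₂.sum + Q₃.sum + Q₄.sum = 16 * (m * S) + 12 * S := by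
    have hx : (Q₁ + Q₂ + Q₃ + Q₄).sum = Q₁.sum + Q₂.sum + Q₃.sum + Q₄.sum := by
      simp [Multiset.sum_add]
    rw [← hx, ← hsplit, Multiset.sum_add, Multiset.sum_replicate, hsum, smul_eq_mul]
    ring
  have l3 : 4 * (m * S) + 4 * S ≤ Q₃.sum := by
    have := Multiset.card_nsmul_le_sum hb3
    simp only [hc3, smul_eq_mul] at this
    calc 4 * (m * S) + 4 * S = (m + 1) * (4 * S) := by ring
      _ ≤ Q₃.sum := this
  have l4 : 4 * (m * S) + 4 * S ≤ Q₄.sum := by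
    have := Multiset.card_nsmul_le_sum hb4
    simp only [hc4, smul_eq_mul] at this
    calc 4 * (m * S) + 4 * S = (m + 1) * (4 * S) := by ring
      _ ≤ Q₄.sum := this
  have u1 : 4 * (m * S) + 2 * S ≤ Q₁.sum := by
    calc 4 * (m * S) + 2 * S = (4 * m + 2) * S := by ring
      _ ≤ Q₁.sum := h1
  have u2 : 4 * (m * S) + 2 * S ≤ Q₂.sum := by
    calc 4 * (m * S) + 2 * S = (4 * m + 2) * S := by ring
      _ ≤ Q₂.sum := h2
  have key : Q₁.sum = 4 * (m * S) + 2 * S ∧ Q₂.sum = 4 * (m * S) + 2 * S ∧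
      Q₃.sum = 4 * (m * S) + 4 * S ∧ Q₄.sum = 4 * (m * S) + 4 * S := by
    generalize m * S = t at hstot l3 l4 u1 u2
    omega
  obtain ⟨e1, e2, e3, e4⟩ := key
  have q3 : Q₃ = Multiset.replicate (m + 1) (4 * S) := by
    apply eq_replicate_of_forall_le_of_sum Q₃ (m + 1) (4 * S) hc3 hb3
    rw [e3]; ring
  have q4 : Q₄ = Multiset.replicate (m + 1) (4 * S) := by
    apply eq_replicate_of_forall_le_of_sum Q₄ (m + 1) (4 * S) hc4 hb4
    rw [e4]; ring
  have hrep : Q₃ + Q₄ = Multiset.replicate (2 * (m + 1)) (4 * S) := by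
    rw [q3, q4, ← Multiset.replicate_add]
    congr 1
    ring
  have hX2 : X₂ = Q₁ + Q₂ := by
    have h' : X₂ + Multiset.replicate (2 * (m + 1)) (4 * S)
        = (Q₁ + Q₂) + Multiset.replicate (2 * (m + 1)) (4 * S) := by
      rw [hsplit, ← hrep]; abel
    exact add_right_cancel h'
  refine ⟨Q₁, Q₂, hX2, hc1, hc2, ?_, ?_⟩
  · rw [e1]; ring
  · rw [e2]; ring

set_option maxHeartbeats 1000000 in
theorem four_way_key_claim (m S : ℕ) (hm : 1 ≤ m) (hS : 1 ≤ S)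
    (X₂ : Multiset ℕ)
    (hcard : Multiset.card X₂ = 2 * m)
    (hrange : ∀ x ∈ X₂, 4 * S < x ∧ x ≤ 6 * S)
    (hsum : X₂.sum = 2 * (4 * m + 2) * S)
    (X₄ : Multiset ℕ) (hX₄ : X₄ = X₂ + Multiset.replicate (2 * (m + 1)) (4 * S)) :
    (∃ P₁ P₂ P₃ P₄ : Multiset ℕ, X₄ = P₁ + P₂ + P₃ + P₄ ∧
        (4 * m + 2) * S ≤ P₁.sum ∧ (4 * m + 2) * S ≤ P₂.sum ∧
        (4 * m + 2) * S ≤ P₃.sum ∧ (4 * m + 2) * S ≤ P₄.sum) ↔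
    (∃ A B : Multiset ℕ, X₂ = A + B ∧ Multiset.card A = m ∧ Multiset.card B = m ∧
        A.sum = (4 * m + 2) * S ∧ B.sum = (4 * m + 2) * S) := by
  constructor
  · rintro ⟨P₁, P₂, P₃, P₄, hsplit, h1, h2, h3, h4⟩
    have hsplit' : X₂ + Multiset.replicate (2 * (m + 1)) (4 * S) = P₁ + P₂ + P₃ + P₄ := by
      rw [← hX₄]; exact hsplit
    -- every element of X₄ is ≥ 4*S
    have hlow : ∀ x ∈ X₄, 4 * S ≤ x := by
      intro x hx
      rw [hX₄, Multiset.mem_add] at hx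
      rcases hx with hx | hx
      · exact le_of_lt (hrange x hx).1
      · rw [Multiset.eq_of_mem_replicate hx]
    have hb1 : ∀ x ∈ P₁, 4 * S ≤ x := fun x hx => hlow x (by rw [hsplit]; simp [Multiset.mem_add]; tauto)
    have hb2 : ∀ x ∈ P₂, 4 * S ≤ x := fun x hx => hlow x (by rw [hsplit]; simp [Multiset.mem_add]; tauto)
    have hb3 : ∀ x ∈ P₃, 4 * S ≤ x := fun x hx => hlow x (by rw [hsplit]; simp [Multiset.mem_add]; tauto)
    have hb4 : ∀ x ∈ P₄, 4 * S ≤ x := fun x hx => hlow x (by rw [hsplit]; simp [Multiset.mem_add]; tauto)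
    have hk : Multiset.card P₁ + Multiset.card P₂ + Multiset.card P₃ + Multiset.card P₄
        = 4 * m + 2 := by
      have := congrArg Multiset.card hsplit'
      simp [Multiset.card_add, hcard] at this
      omega
    have hstot : P₁.sum + P₂.sum + P₃.sum + P₄.sum = (16 * m + 12) * S := by
      have := congrArg Multiset.sum hsplit'
      simp [Multiset.sum_add, Multiset.sum_replicate, hsum, smul_eq_mul] at this
      rw [← this]; ring
    have lb : ∀ Q : Multiset ℕ, (∀ x ∈ Q, 4 * S ≤ x) → 4 * S * Multiset.card Q ≤ Q.sum := by
      intro Q hQ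
      have := Multiset.card_nsmul_le_sum hQ
      rw [smul_eq_mul] at this
      calc 4 * S * Multiset.card Q = Multiset.card Q * (4 * S) := by ring
        _ ≤ Q.sum := this
    have l1 := lb P₁ hb1
    have l2 := lb P₂ hb2
    have l3 := lb P₃ hb3
    have l4 := lb P₄ hb4
    have b1 := kbound m S _ _ _ _ _ _ _ _ hS hk hstot l1 l2 l3 l4 h1 h2 h3 h4
    have b2 := kbound m S _ _ _ _ _ _ _ _ hS (by omega : Multiset.card P₂ + Multiset.card P₁ + Multiset.card P₃ + Multiset.card P₄ = 4 * m + 2) (by linarith) l2 l1 l3 l4 h2 h1 h3 h4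
    have b3 := kbound m S _ _ _ _ _ _ _ _ hS (by omega : Multiset.card P₃ + Multiset.card P₁ + Multiset.card P₂ + Multiset.card P₄ = 4 * m + 2) (by linarith) l3 l1 l2 l4 h3 h1 h2 h4
    have b4 := kbound m S _ _ _ _ _ _ _ _ hS (by omega : Multiset.card P₄ + Multiset.card P₁ + Multiset.card P₂ + Multiset.card P₃ = 4 * m + 2) (by linarith) l4 l1 l2 l3 h4 h1 h2 h3
    have hcases :
        (Multiset.card P₁ = m ∧ Multiset.card P₂ = m ∧ Multiset.card P₃ = m + 1 ∧ Multiset.card P₄ = m + 1) ∨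
        (Multiset.card P₁ = m ∧ Multiset.card P₃ = m ∧ Multiset.card P₂ = m + 1 ∧ Multiset.card P₄ = m + 1) ∨
        (Multiset.card P₁ = m ∧ Multiset.card P₄ = m ∧ Multiset.card P₂ = m + 1 ∧ Multiset.card P₃ = m + 1) ∨
        (Multiset.card P₂ = m ∧ Multiset.card P₃ = m ∧ Multiset.card P₁ = m + 1 ∧ Multiset.card P₄ = m + 1) ∨
        (Multiset.card P₂ = m ∧ Multiset.card P₄ = m ∧ Multiset.card P₁ = m + 1 ∧ Multiset.card P₃ = m + 1) ∨
        (Multiset.card P₃ = m ∧ Multiset.card P₄ = m ∧ Multiset.card P₁ = m + 1 ∧ Multiset.card P₂ = m + 1) := by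
      clear hstot l1 l2 l3 l4 h1 h2 h3 h4 lb hsplit hsplit' hlow hb1 hb2 hb3 hb4 hsum hX₄ hrange
      omega
    rcases hcases with ⟨c1, c2, c3, c4⟩ | ⟨c1, c2, c3, c4⟩ | ⟨c1, c2, c3, c4⟩ |
      ⟨c1, c2, c3, c4⟩ | ⟨c1, c2, c3, c4⟩ | ⟨c1, c2, c3, c4⟩
    · exact helper m S hS X₂ hsum P₁ P₂ P₃ P₄ hsplit' hb3 hb4 h1 h2 c1 c2 c3 c4
    · exact helper m S hS X₂ hsum P₁ P₃ P₂ P₄ (by rw [hsplit']; abel) hb2 hb4 h1 h3 c1 c2 c3 c4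
    · exact helper m S hS X₂ hsum P₁ P₄ P₂ P₃ (by rw [hsplit']; abel) hb2 hb3 h1 h4 c1 c2 c3 c4
    · exact helper m S hS X₂ hsum P₂ P₃ P₁ P₄ (by rw [hsplit']; abel) hb1 hb4 h2 h3 c1 c2 c3 c4
    · exact helper m S hS X₂ hsum P₂ P₄ P₁ P₃ (by rw [hsplit']; abel) hb1 hb3 h2 h4 c1 c2 c3 c4
    · exact helper m S hS X₂ hsum P₃ P₄ P₁ P₂ (by rw [hsplit']; abel) hb1 hb2 h3 h4 c1 c2 c3 c4
  · rintro ⟨A, B, hAB, hcA, hcB, hsA, hsB⟩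
    refine ⟨A, B, Multiset.replicate (m + 1) (4 * S), Multiset.replicate (m + 1) (4 * S),
        ?_, le_of_eq hsA.symm, le_of_eq hsB.symm, ?_, ?_⟩
    · rw [hX₄, hAB, show 2 * (m + 1) = (m + 1) + (m + 1) from by ring,
        Multiset.replicate_add]
      abel
    · rw [Multiset.sum_replicate, smul_eq_mul]
      calc (4 * m + 2) * S ≤ (4 * m + 4) * S := Nat.mul_le_mul_right _ (by omega)
        _ = (m + 1) * (4 * S) := by ring
    · rw [Multiset.sum_replicate, smul_eq_mul]
      calc (4 * m + 2) * S ≤ (4 * m + 4) * S := Nat.mul_le_mul_right _ (by omega)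
        _ = (m + 1) * (4 * S) := by ring
end

section
/- Under the same setup: in any partition of X₄ into four parts each of sum at least (4m+2)S, some two of the four parts together contain exactly 2(m+1) items, and these 2(m+1) items all have size exactly 4S. -/
lemma all_eq_of_sum_le (c : ℕ) (Q : Multiset ℕ) (h : ∀ x ∈ Q, c ≤ x)
    (hs : Q.sum ≤ Multiset.card Q * c) : ∀ x ∈ Q, x = c := by
  intro x hx
  have h1 := h x hx
  have hQ : x ::ₘ Q.erase x = Q := Multiset.cons_erase hx
  have h2 : Multiset.card (Q.erase x) * c ≤ (Q.erase x).sum := by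
    simpa [mul_comm] using Multiset.card_nsmul_le_sum
      (fun y hy => h y (Multiset.mem_of_mem_erase hy))
  have h3 : Q.sum = x + (Q.erase x).sum := by rw [← hQ]; simp
  have h4 : Multiset.card Q = Multiset.card (Q.erase x) + 1 := by rw [← hQ]; simp
  rw [h4] at hs
  have h5 : (Multiset.card (Q.erase x) + 1) * c = Multiset.card (Q.erase x) * c + c := by
    ring
  exact le_antisymm (by linarith) h1

theorem two_bins_of_small_items (m S : ℕ) (hm : 1 ≤ m) (hS : 1 ≤ S)
    (X₂ : Multiset ℕ)
    (hcard : Multiset.card X₂ = 2 * m)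
    (hrange : ∀ x ∈ X₂, 4 * S < x ∧ x ≤ 6 * S)
    (hsum : X₂.sum = 2 * (4 * m + 2) * S)
    (X₄ : Multiset ℕ) (hX₄ : X₄ = X₂ + Multiset.replicate (2 * (m + 1)) (4 * S))
    (P : Fin 4 → Multiset ℕ) (hP : X₄ = ∑ i, P i)
    (hbound : ∀ i, (4 * m + 2) * S ≤ (P i).sum) :
    ∃ i j : Fin 4, i ≠ j ∧
      Multiset.card (P i) + Multiset.card (P j) = 2 * (m + 1) ∧
      (∀ x ∈ P i + P j, x = 4 * S) := by
  rw [Fin.sum_univ_four] at hP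
  have hge : ∀ x ∈ X₄, 4 * S ≤ x := by
    intro x hx
    rw [hX₄, Multiset.mem_add] at hx
    rcases hx with hx | hx
    · exact le_of_lt (hrange x hx).1
    · rw [Multiset.eq_of_mem_replicate hx]
  have hfin : ∀ i : Fin 4, i = 0 ∨ i = 1 ∨ i = 2 ∨ i = 3 := by decide
  have hsum4 : (P 0).sum + (P 1).sum + (P 2).sum + (P 3).sum = 16*(m*S)+12*S := by
    have h : X₄.sum = 16*(m*S)+12*S := by
      rw [hX₄]
      simp only [Multiset.sum_add, Multiset.sum_replicate, smul_eq_mul, hsum]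
      ring
    rw [hP] at h
    simpa [Multiset.sum_add] using h
  have hcard4 : Multiset.card (P 0) + Multiset.card (P 1) + Multiset.card (P 2)
      + Multiset.card (P 3) = 4*m+2 := by
    have h : Multiset.card X₄ = 4*m+2 := by
      rw [hX₄]; simp [hcard]; ring
    rw [hP] at h
    simpa using h
  have hb0 := hbound 0; have hb1 := hbound 1
  have hb2 := hbound 2; have hb3 := hbound 3
  have e4 : (4*m+2)*S = 4*(m*S)+2*S := by ring
  rw [e4] at hb0 hb1 hb2 hb3
  have hmem : ∀ i, ∀ x ∈ P i, 4 * S ≤ x := by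
    intro i x hx
    apply hge
    rw [hP]
    rcases hfin i with h | h | h | h <;> subst h <;>
      simp only [Multiset.mem_add] <;> tauto
  have hlow : ∀ i, Multiset.card (P i) * (4 * S) ≤ (P i).sum := by
    intro i
    simpa [mul_comm] using Multiset.card_nsmul_le_sum (hmem i)
  have hle : ∀ i : Fin 4, Multiset.card (P i) ≤ m + 1 := by
    intro i
    have hsi : (P i).sum ≤ 4*(m*S)+6*S := by
      rcases hfin i with h | h | h | h <;> subst h <;> linarith
    have h1 : (4 * Multiset.card (P i)) * S ≤ (4*m+6)*S := by
      have h2 := hlow i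
      have e1 : Multiset.card (P i) * (4*S) = (4 * Multiset.card (P i)) * S := by ring
      have e2 : (4*m+6)*S = 4*(m*S)+6*S := by ring
      linarith
    have h3 : 4 * Multiset.card (P i) ≤ 4*m+6 :=
      Nat.le_of_mul_le_mul_right h1 (by omega)
    omega
  have h0 := hle 0; have h1 := hle 1; have h2 := hle 2; have h3 := hle 3
  have hcases : Multiset.card (P 0) + Multiset.card (P 1) = 2*(m+1)
      ∨ Multiset.card (P 0) + Multiset.card (P 2) = 2*(m+1)
      ∨ Multiset.card (P 0) + Multiset.card (P 3) = 2*(m+1)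
      ∨ Multiset.card (P 1) + Multiset.card (P 2) = 2*(m+1)
      ∨ Multiset.card (P 1) + Multiset.card (P 3) = 2*(m+1)
      ∨ Multiset.card (P 2) + Multiset.card (P 3) = 2*(m+1) := by omega
  have key : ∀ i j : Fin 4, Multiset.card (P i) + Multiset.card (P j) = 2*(m+1) →
      (P i).sum + (P j).sum ≤ 8*(m*S)+8*S → ∀ x ∈ P i + P j, x = 4 * S := by
    intro i j hc hs
    apply all_eq_of_sum_le
    · intro x hx
      rw [Multiset.mem_add] at hx
      rcases hx with hx | hx
      exacts [hmem i x hx, hmem j x hx]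
    · have e : Multiset.card (P i + P j) * (4 * S) = 8*(m*S)+8*S := by
        rw [Multiset.card_add, hc]; ring
      rw [e, Multiset.sum_add]
      exact hs
  rcases hcases with h | h | h | h | h | h
  · exact ⟨0, 1, by decide, h, key 0 1 h (by linarith)⟩
  · exact ⟨0, 2, by decide, h, key 0 2 h (by linarith)⟩
  · exact ⟨0, 3, by decide, h, key 0 3 h (by linarith)⟩
  · exact ⟨1, 2, by decide, h, key 1 2 h (by linarith)⟩
  · exact ⟨1, 3, by decide, h, key 1 3 h (by linarith)⟩
  · exact ⟨2, 3, by decide, h, key 2 3 h (by linarith)⟩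
end

section
/- Under the same setup: in any partition of X₄ into four parts each of sum at least (4m+2)S, the two parts containing the 2m items of X₂ each have sum exactly (4m+2)S and each contain exactly m items. -/
theorem big_bins_structure (m S : ℕ) (hm : 1 ≤ m) (hS : 1 ≤ S)
    (X₂ : Multiset ℕ)
    (hcard : Multiset.card X₂ = 2 * m)
    (hrange : ∀ x ∈ X₂, 4 * S < x ∧ x ≤ 6 * S)
    (hsum : X₂.sum = 2 * (4 * m + 2) * S)
    (X₄ : Multiset ℕ) (hX₄ : X₄ = X₂ + Multiset.replicate (2 * (m + 1)) (4 * S))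
    (P₁ P₂ P₃ P₄ : Multiset ℕ) (hP : X₄ = P₁ + P₂ + P₃ + P₄)
    (h1 : (4 * m + 2) * S ≤ P₁.sum) (h2 : (4 * m + 2) * S ≤ P₂.sum)
    (h3 : (4 * m + 2) * S ≤ P₃.sum) (h4 : (4 * m + 2) * S ≤ P₄.sum)
    (hX₂parts : P₃ + P₄ = X₂) :
    P₃.sum = (4 * m + 2) * S ∧ P₄.sum = (4 * m + 2) * S ∧
    Multiset.card P₃ = m ∧ Multiset.card P₄ = m := by
  have hsum34 : P₃.sum + P₄.sum = 2 * (4 * m + 2) * S := by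
    rw [← Multiset.sum_add, hX₂parts, hsum]
  have hring : 2 * (4 * m + 2) * S = (4 * m + 2) * S + (4 * m + 2) * S := by ring
  have hs3 : P₃.sum = (4 * m + 2) * S := by omega
  have hs4 : P₄.sum = (4 * m + 2) * S := by omega
  have hcard34 : Multiset.card P₃ + Multiset.card P₄ = 2 * m := by
    rw [← Multiset.card_add, hX₂parts, hcard]
  have key : ∀ P : Multiset ℕ, P ≤ X₂ → P.sum = (4 * m + 2) * S →
      Multiset.card P ≤ m := by
    intro P hle hPs
    by_contra h
    push_neg at h
    have hbound : Multiset.card P • (4 * S + 1) ≤ P.sum := by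
      apply Multiset.card_nsmul_le_sum
      intro x hx
      have := (hrange x (Multiset.mem_of_le hle hx)).1
      omega
    rw [smul_eq_mul, hPs] at hbound
    nlinarith
  have h3le : Multiset.card P₃ ≤ m :=
    key P₃ (le_trans (Multiset.le_add_right _ _) hX₂parts.le) hs3
  have h4le : Multiset.card P₄ ≤ m :=
    key P₄ (le_trans (Multiset.le_add_left _ _) hX₂parts.le) hs4
  exact ⟨hs3, hs4, by omega, by omega⟩
end

section
/- Motzkin–Straus theorem: Let G be a finite simple graph on vertex set {1,…,n} with clique number ω(G) ≥ 1. Then the maximum over y in the standard simplex Δⁿ = {y ∈ ℝⁿ : y_i ≥ 0, Σ y_i = 1} of g(G,y) := Σ_{{i,j} ∈ E(G)} y_i y_j equals (1/2)(1 − 1/ω(G)). -/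
set_option linter.unusedSectionVars false
open Finset

variable {V : Type*} [Fintype V] [DecidableEq V] (G : SimpleGraph V) [DecidableRel G.Adj]

def ad (p q : V) : ℝ := if G.Adj p q then 1 else 0

def Bd (z w : V → ℝ) : ℝ := ∑ p, ∑ q, ad G p q * (z p * w q)

def Qd (y : V → ℝ) : ℝ := ∑ p, ∑ q, if G.Adj p q then y p * y q else 0

def Ld (y : V → ℝ) (i : V) : ℝ := ∑ q, ad G i q * y q

theorem edge_sum_eq (y : V → ℝ) :
    ∑ e ∈ G.edgeFinset,
      Sym2.lift ⟨fun i j => y i * y j, fun i j => mul_comm (y i) (y j)⟩ e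
    = Qd G y / 2 := by
  set F : Sym2 V → ℝ := Sym2.lift ⟨fun i j => y i * y j, fun i j => mul_comm (y i) (y j)⟩
  have hdart : ∑ d : G.Dart, F d.edge = 2 * ∑ e ∈ G.edgeFinset, F e := by
    rw [← Finset.sum_fiberwise_of_maps_to (g := fun d : G.Dart => d.edge)
        (t := G.edgeFinset) (s := Finset.univ)
        (fun d _ => by rw [SimpleGraph.mem_edgeFinset]; exact d.edge_mem)
        (fun d : G.Dart => F d.edge)]
    rw [Finset.mul_sum]
    refine Finset.sum_congr rfl fun e he => ?_
    rw [Finset.sum_congr rfl (fun d hd => by rw [(Finset.mem_filter.mp hd).2]),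
      Finset.sum_const, G.dart_edge_fiber_card e (SimpleGraph.mem_edgeFinset.mp he)]
    simp [mul_comm]
  have hQ : ∑ d : G.Dart, F d.edge = Qd G y := by
    rw [Qd, ← Finset.sum_product', ← Finset.sum_filter]
    refine (Finset.sum_bij' (fun (d : G.Dart) _ => d.toProd)
      (fun p hp => (⟨p, (Finset.mem_filter.mp hp).2⟩ : G.Dart)) ?_ ?_ ?_ ?_ ?_)
    · intro d _; simp [d.adj]
    · intro p hp; simp
    · intro d _; rfl
    · intro p hp; rfl
    · intro d _
      obtain ⟨⟨a, b⟩, h⟩ := d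
      simp [F, SimpleGraph.Dart.edge]
  rw [← hQ, hdart]; ring

lemma Qd_eq (y : V → ℝ) : Qd G y = Bd G y y := by
  unfold Qd Bd ad
  refine Finset.sum_congr rfl fun p _ => Finset.sum_congr rfl fun q _ => ?_
  split <;> simp

lemma Bd_symm (z w : V → ℝ) : Bd G z w = Bd G w z := by
  unfold Bd
  rw [Finset.sum_comm]
  refine Finset.sum_congr rfl fun p _ => Finset.sum_congr rfl fun q _ => ?_
  unfold ad
  by_cases h : G.Adj p q
  · rw [if_pos h, if_pos h.symm]; ring
  · rw [if_neg fun hh => h hh.symm, if_neg h]; ring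

lemma Bd_sub_single (i j : V) (w : V → ℝ) :
    Bd G (fun k => (if k = i then 1 else 0) - (if k = j then 1 else 0)) w
      = (∑ q, ad G i q * w q) - (∑ q, ad G j q * w q) := by
  unfold Bd
  rw [← Finset.sum_sub_distrib]
  rw [Finset.sum_eq_sum_sdiff_singleton_add (Finset.mem_univ i)]
  by_cases hij : i = j
  · subst hij
    rw [Finset.sum_eq_zero (fun p hp => ?_)]
    · simp
    · have : p ≠ i := by simpa using (Finset.mem_sdiff.mp hp).2
      simp [this]
  · rw [Finset.sum_eq_sum_sdiff_singleton_add
      (show j ∈ Finset.univ \ {i} by simp [Ne.symm hij])]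
    rw [Finset.sum_eq_zero (fun p hp => ?_)]
    · simp [hij, Ne.symm hij]
      ring
    · have h1 : p ≠ i := by
        have := (Finset.mem_sdiff.mp (Finset.mem_sdiff.mp hp).1).2; simpa using this
      have h2 : p ≠ j := by simpa using (Finset.mem_sdiff.mp hp).2
      simp [h1, h2]

lemma Bd_expand (y d : V → ℝ) (t : ℝ) :
    Bd G (fun k => y k + t * d k) (fun k => y k + t * d k)
      = Bd G y y + t * Bd G d y + t * Bd G y d + t * t * Bd G d d := by
  unfold Bd
  rw [Finset.mul_sum, Finset.mul_sum, Finset.mul_sum, ← Finset.sum_add_distrib,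
    ← Finset.sum_add_distrib, ← Finset.sum_add_distrib]
  refine Finset.sum_congr rfl fun p _ => ?_
  rw [Finset.mul_sum, Finset.mul_sum, Finset.mul_sum, ← Finset.sum_add_distrib,
    ← Finset.sum_add_distrib, ← Finset.sum_add_distrib]
  exact Finset.sum_congr rfl fun q _ => by ring

lemma sum_ad_single (p i j : V) :
    ∑ q, ad G p q * ((if q = i then 1 else 0) - (if q = j then 1 else 0))
      = ad G p i - ad G p j := by
  rw [show (fun q => ad G p q * ((if q = i then (1:ℝ) else 0) - (if q = j then 1 else 0)))
      = (fun q => (if q = i then ad G p q else 0) - (if q = j then ad G p q else 0)) from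
    funext fun q => by split <;> split <;> ring]
  rw [Finset.sum_sub_distrib]
  simp [Finset.sum_ite_eq']

lemma Qd_shift (y : V → ℝ) (i j : V) (hne : i ≠ j) (hnadj : ¬ G.Adj i j) (t : ℝ) :
    Qd G (fun k => y k + t * ((if k = i then 1 else 0) - (if k = j then 1 else 0)))
      = Qd G y + 2 * t * (Ld G y i - Ld G y j) := by
  have hdd : Bd G (fun k => (if k = i then (1:ℝ) else 0) - (if k = j then 1 else 0))
      (fun k => (if k = i then (1:ℝ) else 0) - (if k = j then 1 else 0)) = 0 := by
    rw [Bd_sub_single, sum_ad_single, sum_ad_single]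
    have h1 : ad G i i = 0 := by simp [ad]
    have h2 : ad G j j = 0 := by simp [ad]
    have h3 : ad G i j = 0 := by simp [ad, hnadj]
    have h4 : ad G j i = 0 := by
      unfold ad; rw [if_neg fun hh => hnadj hh.symm]
    rw [h1, h2, h3, h4]; ring
  rw [Qd_eq, Bd_expand,
    Bd_symm G y (fun k => (if k = i then (1:ℝ) else 0) - (if k = j then 1 else 0)),
    Bd_sub_single, hdd, ← Qd_eq, Ld, Ld]
  ring

lemma Qd_clique_support (y : V → ℝ) (S : Finset V)
    (hout : ∀ k, k ∉ S → y k = 0)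
    (hcl : ∀ i ∈ S, ∀ j ∈ S, i ≠ j → G.Adj i j) :
    Qd G y = (∑ p ∈ S, y p) * (∑ q ∈ S, y q) - ∑ p ∈ S, y p * y p := by
  have h1 : Qd G y = ∑ p ∈ S, ∑ q ∈ S, (if G.Adj p q then y p * y q else 0) := by
    rw [Qd, ← Finset.sum_subset (Finset.subset_univ S) ?_]
    · refine Finset.sum_congr rfl fun p hp => ?_
      rw [← Finset.sum_subset (Finset.subset_univ S) ?_]
      intro q _ hq
      simp [hout q hq]
    · intro p _ hp
      exact Finset.sum_eq_zero fun q _ => by simp [hout p hp]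
  rw [h1]
  rw [Finset.sum_congr rfl (fun p hp => Finset.sum_congr rfl (fun q hq => by
    show (if G.Adj p q then y p * y q else 0)
      = y p * y q - (if p = q then y p * y q else 0)
    by_cases hpq : p = q
    · subst hpq; simp [G.irrefl]
    · rw [if_pos (hcl p hp q hq hpq), if_neg hpq]; ring))]
  rw [Finset.sum_congr rfl (fun p (hp : p ∈ S) => Finset.sum_sub_distrib _ _),
    Finset.sum_sub_distrib, Finset.sum_mul_sum]
  congr 1
  refine Finset.sum_congr rfl fun p hp => ?_
  rw [Finset.sum_ite_eq S p (fun q => y p * y q), if_pos hp]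

lemma key (ω : ℕ) (hω : 1 ≤ ω)
    (hmax : ∀ k : ℕ, (∃ s : Finset V, G.IsNClique k s) → k ≤ ω) :
    ∀ m : ℕ, ∀ y : V → ℝ, (∀ i, 0 ≤ y i) → (∑ i, y i) = 1 →
      #(Finset.univ.filter fun i => y i ≠ 0) ≤ m → Qd G y ≤ 1 - 1/(ω:ℝ) := by
  intro m
  induction m with
  | zero =>
    intro y hpos hsum hcard
    exfalso
    have hall : ∀ i, y i = 0 := by
      intro i
      by_contra h
      have hmem : i ∈ Finset.univ.filter fun i => y i ≠ 0 := by simp [h]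
      have := Finset.card_pos.mpr ⟨i, hmem⟩
      omega
    rw [Finset.sum_congr rfl (fun i _ => hall i), Finset.sum_const, smul_zero] at hsum
    norm_num at hsum
  | succ m ih =>
    intro y hpos hsum hcard
    set S := Finset.univ.filter fun i => y i ≠ 0 with hS
    have hsuppS : ∀ k, y k ≠ 0 → k ∈ S := fun k hk => by simp [hS, hk]
    have hSout : ∀ k, k ∉ S → y k = 0 := by
      intro k hk; by_contra h; exact hk (hsuppS k h)
    by_cases hcl : ∀ i ∈ S, ∀ j ∈ S, i ≠ j → G.Adj i j
    · -- support is a clique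
      have hySsum : ∑ i ∈ S, y i = 1 := by
        rw [hS, Finset.sum_filter_ne_zero]; exact hsum
      have hSne : S.Nonempty := by
        by_contra h
        rw [Finset.not_nonempty_iff_eq_empty] at h
        rw [h, Finset.sum_empty] at hySsum
        norm_num at hySsum
      have hSω : S.card ≤ ω := by
        refine hmax S.card ⟨S, ⟨?_, rfl⟩⟩
        intro a ha b hb hne
        exact hcl a (Finset.mem_coe.mp ha) b (Finset.mem_coe.mp hb) hne
      have h3 : Qd G y = (∑ p ∈ S, y p) * (∑ q ∈ S, y q) - ∑ p ∈ S, y p * y p :=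
        Qd_clique_support G y S hSout hcl
      have hcs : (1:ℝ) ≤ S.card * ∑ p ∈ S, y p * y p := by
        have := sq_sum_le_card_mul_sum_sq (s := S) (f := y)
        rw [hySsum] at this
        calc (1:ℝ) = 1^2 := by norm_num
          _ ≤ S.card * ∑ p ∈ S, y p ^ 2 := by exact_mod_cast this
          _ = S.card * ∑ p ∈ S, y p * y p := by
              congr 1; exact Finset.sum_congr rfl fun p _ => sq (y p) ▸ by ring
      have hcardpos : (0:ℝ) < S.card := by
        exact_mod_cast Finset.card_pos.mpr hSne
      have hsumsq : (1:ℝ)/ω ≤ ∑ p ∈ S, y p * y p := by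
        have hωpos : (0:ℝ) < ω := by exact_mod_cast hω
        have hcω : (S.card : ℝ) ≤ ω := by exact_mod_cast hSω
        rw [div_le_iff₀ hωpos]
        nlinarith [hcs]
      rw [h3, hySsum]
      nlinarith [hsumsq]
    · push_neg at hcl
      obtain ⟨i, hiS, j, hjS, hij, hnadj⟩ := hcl
      have main : ∀ i j : V, i ∈ S → j ∈ S → i ≠ j → ¬G.Adj i j →
          Ld G y j ≤ Ld G y i → Qd G y ≤ 1 - 1/(ω:ℝ) := by
        intro i j hiS hjS hij hnadj hL
        set z : V → ℝ :=
          fun k => y k + y j * ((if k = i then 1 else 0) - (if k = j then 1 else 0)) with hz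
        have hzi : z i = y i + y j := by simp [hz, hij]
        have hzj : z j = 0 := by simp [hz, Ne.symm hij]
        have hzo : ∀ k, k ≠ i → k ≠ j → z k = y k := by
          intro k h1 h2; simp [hz, h1, h2]
        have hzpos : ∀ k, 0 ≤ z k := by
          intro k
          by_cases h1 : k = i
          · subst h1; rw [hzi]; exact add_nonneg (hpos k) (hpos j)
          · by_cases h2 : k = j
            · subst h2; rw [hzj]
            · rw [hzo k h1 h2]; exact hpos k
        have hzsum : ∑ k, z k = 1 := by
          rw [hz, Finset.sum_add_distrib, hsum, ← Finset.mul_sum,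
            Finset.sum_sub_distrib]
          simp [Finset.sum_ite_eq']
        have hsupp : (Finset.univ.filter fun k => z k ≠ 0) ⊆ S.erase j := by
          intro k hk
          simp only [Finset.mem_filter, Finset.mem_univ, true_and] at hk
          have hkj : k ≠ j := by rintro rfl; exact hk hzj
          refine Finset.mem_erase.mpr ⟨hkj, ?_⟩
          by_cases h1 : k = i
          · subst h1; exact hiS
          · rw [hzo k h1 hkj] at hk; exact hsuppS k hk
        have hcard2 : #(Finset.univ.filter fun k => z k ≠ 0) ≤ m := by
          have h1 := Finset.card_le_card hsupp
          have h2 : (S.erase j).card = S.card - 1 := Finset.card_erase_of_mem hjS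
          have h3 : 1 ≤ S.card := Finset.card_pos.mpr ⟨j, hjS⟩
          omega
        have hQz := ih z hzpos hzsum hcard2
        have hshift := Qd_shift G y i j hij hnadj (y j)
        have hmono : Qd G y ≤ Qd G z := by
          rw [hz, hshift]
          nlinarith [hpos j, hL]
        linarith
      rcases le_total (Ld G y j) (Ld G y i) with h | h
      · exact main i j hiS hjS hij hnadj h
      · exact main j i hjS hiS hij.symm (fun hh => hnadj hh.symm) h

theorem motzkin_straus (n : ℕ) (hn : 1 ≤ n) (G : SimpleGraph (Fin n))
    [DecidableRel G.Adj] (ω : ℕ) (hω : 1 ≤ ω)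
    (hclique : IsGreatest {k : ℕ | ∃ s : Finset (Fin n), G.IsNClique k s} ω) :
    IsGreatest
      {v : ℝ | ∃ y : Fin n → ℝ, (∀ i, 0 ≤ y i) ∧ (∑ i, y i) = 1 ∧
        v = ∑ e ∈ G.edgeFinset,
          Sym2.lift ⟨fun i j => y i * y j, fun i j => mul_comm (y i) (y j)⟩ e}
      ((1 / 2) * (1 - 1 / (ω : ℝ))) := by
  classical
  have hωR : (0:ℝ) < ω := by exact_mod_cast hω
  constructor
  · -- membership
    obtain ⟨s, hs⟩ := hclique.1
    have hne : (ω:ℝ) ≠ 0 := ne_of_gt hωR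
    set y : Fin n → ℝ := fun i => if i ∈ s then (ω:ℝ)⁻¹ else 0 with hy
    have hyout : ∀ k, k ∉ s → y k = 0 := fun k hk => by simp [hy, hk]
    have hyin : ∀ k, k ∈ s → y k = (ω:ℝ)⁻¹ := fun k hk => by simp [hy, hk]
    have hsum : ∑ i, y i = 1 := by
      rw [hy]
      rw [Finset.sum_ite_mem Finset.univ s (fun _ => (ω:ℝ)⁻¹), Finset.univ_inter,
        Finset.sum_const, hs.2, nsmul_eq_mul]
      field_simp
    refine ⟨y, fun i => ?_, hsum, ?_⟩
    · rw [hy]; dsimp only; split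
      · positivity
      · exact le_refl 0
    · rw [edge_sum_eq]
      have hcl : ∀ i ∈ s, ∀ j ∈ s, i ≠ j → G.Adj i j := by
        intro a ha b hb hne
        exact hs.1 (Finset.mem_coe.mpr ha) (Finset.mem_coe.mpr hb) hne
      have h3 := Qd_clique_support G y s hyout hcl
      have hsc : ∑ p ∈ s, y p = (ω:ℝ) * (ω:ℝ)⁻¹ := by
        rw [Finset.sum_congr rfl hyin, Finset.sum_const, hs.2, nsmul_eq_mul]
      have hsc2 : ∑ p ∈ s, y p * y p = (ω:ℝ) * ((ω:ℝ)⁻¹ * (ω:ℝ)⁻¹) := by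
        rw [Finset.sum_congr rfl (fun p hp =>
            show y p * y p = (ω:ℝ)⁻¹ * (ω:ℝ)⁻¹ by rw [hyin p hp]),
          Finset.sum_const, hs.2, nsmul_eq_mul]
      have e1 : (ω:ℝ) * ((ω:ℝ)⁻¹ * (ω:ℝ)⁻¹) = (ω:ℝ)⁻¹ := by
        field_simp
      rw [hsc, hsc2, mul_inv_cancel₀ hne, e1] at h3
      rw [h3, one_div, one_div]
      ring
  · -- upper bound
    rintro v ⟨y, hpos, hsum, rfl⟩
    rw [edge_sum_eq]
    have hk := key G ω hω (fun k hk => hclique.2 hk) (Fintype.card (Fin n)) y hpos hsum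
      ((Finset.card_filter_le _ _).trans (by simp))
    linarith
end
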